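/- For any two probability distributions P and Q on a countable sample space with mass functions p and q, and any k ≥ 0, the P-probability of the set of outcomes x with -log₂ q(x) ≤ -log₂ p(x) - k is at most 2^{-k}. -/

import Mathlib

/-- No-hypercompression inequality (Barron's inequality): for probability mass
functions `p`, `q` on a countable space and `k ≥ 0`, the `P`-probability of the
event that `q` assigns code length at least `k` bits less than `p`
(i.e. `q x ≥ p x · 2^k`) is at most `2^{-k}`. -/
theorem no_hypercompression {X : Type*} [Countable X]
    (p q : X → ℝ) (hp0 : ∀ x, 0 ≤ p x) (hq0 : ∀ x, 0 ≤ q x)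
    (hp1 : HasSum p 1) (hq1 : HasSum q 1) (k : ℝ) (hk : 0 ≤ k) :
    (∑' x : {x : X // p x * 2 ^ k ≤ q x}, p x.1) ≤ 2 ^ (-k) := by
  have hqs : Summable fun x : {x : X // p x * 2 ^ k ≤ q x} => q x.1 :=
    (hq1.summable).subtype _
  have hps : Summable fun x : {x : X // p x * 2 ^ k ≤ q x} => p x.1 :=
    (hp1.summable).subtype _
  have h2k : (0:ℝ) < 2 ^ k := Real.rpow_pos_of_pos (by norm_num) k
  have hle : ∀ x : {x : X // p x * 2 ^ k ≤ q x}, p x.1 ≤ 2 ^ (-k) * q x.1 := by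
    intro ⟨x, hx⟩
    have : p x ≤ q x / 2 ^ k := (le_div_iff₀ h2k).2 hx
    simpa [Real.rpow_neg, div_eq_inv_mul] using this
  calc (∑' x : {x : X // p x * 2 ^ k ≤ q x}, p x.1)
      ≤ ∑' x : {x : X // p x * 2 ^ k ≤ q x}, 2 ^ (-k) * q x.1 :=
        Summable.tsum_le_tsum hle hps (hqs.mul_left _)
    _ = 2 ^ (-k) * ∑' x : {x : X // p x * 2 ^ k ≤ q x}, q x.1 := tsum_mul_left
    _ ≤ 2 ^ (-k) * 1 := by
        gcongr
        calc (∑' x : {x : X // p x * 2 ^ k ≤ q x}, q x.1)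
              ≤ ∑' x, q x := Summable.tsum_subtype_le q _ hq0 hq1.summable
            _ = 1 := hq1.tsum_eq
    _ = 2 ^ (-k) := mul_one _
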